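/- In a vertex-transitive finite graph G', the product of the independence number and the clique number is at most the number of vertices: α(G')·ω(G') ≤ |V(G')|. -/

import Mathlib

theorem stmt1 {V : Type*} [Fintype V] (G : SimpleGraph V)
    (htrans : ∀ u v : V, ∃ φ : G ≃g G, φ u = v)
    (s t : Finset V)
    (hs : ∀ u ∈ s, ∀ v ∈ s, u ≠ v → ¬ G.Adj u v)
    (ht : G.IsClique ↑t) :
    s.card * t.card ≤ Fintype.card V := by
  classical
  rcases t.eq_empty_or_nonempty with rfl | ⟨v₀, hv₀⟩
  · simp
  haveI : Fintype (G ≃g G) :=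
    Fintype.ofInjective (fun φ => φ.toEquiv) (fun a b h => by
      cases a; cases b; simpa using h)
  set N : V → V → ℕ :=
    fun v w => (Finset.univ.filter (fun φ : G ≃g G => φ v = w)).card with hNdef
  -- all fiber counts are equal
  have hle : ∀ v w v' w' : V, N v w ≤ N v' w' := by
    intro v w v' w'
    obtain ⟨ψ₁, hψ₁⟩ := htrans v' v
    obtain ⟨ψ₂, hψ₂⟩ := htrans w w'
    apply Finset.card_le_card_of_injOn (fun φ => (ψ₁.trans φ).trans ψ₂)
    · intro φ hφ
      simp only [hNdef, Finset.mem_coe, Finset.mem_filter, Finset.mem_univ, true_and] at hφ ⊢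
      simp [RelIso.trans_apply, hψ₁, hφ, hψ₂]
    · intro a ha b hb h
      apply RelIso.ext
      intro x
      have := DFunLike.congr_fun h (ψ₁.symm x)
      simp only [RelIso.trans_apply, RelIso.apply_symm_apply] at this
      exact ψ₂.injective this
  set c : ℕ := N v₀ v₀ with hcdef
  have hNc : ∀ v w, N v w = c := fun v w =>
    le_antisymm (hle v w v₀ v₀) (hle v₀ v₀ v w)
  have hcpos : 0 < c := by
    rw [hcdef, hNdef]
    apply Finset.card_pos.2
    exact ⟨RelIso.refl _, by simp⟩
  -- total number of automorphisms = card V * c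
  have htotal : Fintype.card (G ≃g G) = Fintype.card V * c := by
    have h := Finset.card_eq_sum_card_fiberwise
      (f := fun φ : G ≃g G => φ v₀) (s := Finset.univ) (t := Finset.univ)
      (fun x _ => Finset.mem_univ _)
    rw [← Finset.card_univ, h]
    have h2 : ∀ w : V, (Finset.univ.filter (fun φ : G ≃g G => φ v₀ = w)).card = c :=
      fun w => hNc v₀ w
    simp only [h2]
    simp [Finset.sum_const, Finset.card_univ]
  -- each automorphism maps at most one clique vertex into s
  have hbound : ∀ φ : G ≃g G, (t.filter (fun v => φ v ∈ s)).card ≤ 1 := by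
    intro φ
    apply Finset.card_le_one.2
    intro a ha b hb
    simp only [Finset.mem_filter] at ha hb
    by_contra hab
    have hadj : G.Adj a b := ht ha.1 hb.1 hab
    have : G.Adj (φ a) (φ b) := φ.map_adj_iff.2 hadj
    exact hs _ ha.2 _ hb.2 (fun h => hab (φ.injective h)) this
  -- inner count: for each v, the number of φ with φ v ∈ s is s.card * c
  have inner : ∀ v : V, (Finset.univ.filter (fun φ : G ≃g G => φ v ∈ s)).card
      = s.card * c := by
    intro v
    have h := Finset.card_eq_sum_card_fiberwise
      (f := fun φ : G ≃g G => φ v)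
      (s := Finset.univ.filter (fun φ : G ≃g G => φ v ∈ s)) (t := s)
      (fun x hx => (Finset.mem_filter.1 hx).2)
    rw [h]
    have h2 : ∀ w ∈ s,
        ((Finset.univ.filter (fun φ : G ≃g G => φ v ∈ s)).filter
          (fun φ => φ v = w)).card = c := by
      intro w hw
      rw [Finset.filter_filter]
      rw [show (Finset.univ.filter (fun φ : G ≃g G => φ v ∈ s ∧ φ v = w))
          = Finset.univ.filter (fun φ : G ≃g G => φ v = w) from
        Finset.filter_congr (fun φ _ => by
          constructor
          · exact fun h => h.2
          · exact fun h => ⟨h ▸ hw, h⟩)]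
      exact hNc v w
    rw [Finset.sum_congr rfl h2, Finset.sum_const, smul_eq_mul]
  -- double counting
  have hsum : t.card * (s.card * c)
      = ∑ φ : G ≃g G, (t.filter (fun v => φ v ∈ s)).card := by
    have step : ∀ φ : G ≃g G, (t.filter (fun v => φ v ∈ s)).card
        = ∑ v ∈ t, if φ v ∈ s then 1 else 0 := by
      intro φ; rw [Finset.card_filter]
    simp only [step]
    rw [Finset.sum_comm]
    have h3 : ∀ v : V, ∑ φ : G ≃g G, (if φ v ∈ s then 1 else 0)
        = s.card * c := by
      intro v
      rw [← inner v, Finset.card_filter]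
    rw [Finset.sum_congr rfl (fun v _ => h3 v), Finset.sum_const, smul_eq_mul]
  have hmain : t.card * (s.card * c) ≤ Fintype.card V * c := by
    rw [hsum, ← htotal, ← Finset.card_univ]
    calc ∑ φ : G ≃g G, (t.filter (fun v => φ v ∈ s)).card
        ≤ ∑ _φ : G ≃g G, 1 := Finset.sum_le_sum (fun φ _ => hbound φ)
      _ = Finset.univ.card := by simp
  have : s.card * t.card * c ≤ Fintype.card V * c := by
    calc s.card * t.card * c = t.card * (s.card * c) := by ring
      _ ≤ Fintype.card V * c := hmain
  exact Nat.le_of_mul_le_mul_right this hcpos
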